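/- arXiv:2312.03975 — 3 statements merged into one kernel-verified Lean document; each statement's English description precedes it below -/
import Mathlib

section
/- Let n ≥ 2k ≥ 4, let V be an n-dimensional vector space over F_q, and let wt : points(V) → ℝ be such that the weight of every k-dimensional subspace (the sum of the weights of its points) lies in {0,1}. Suppose the total number of k-spaces of weight 1 equals x·[n-1 choose k-1]_q. Then for every point P: 0 ≤ wt(P) + ([k-1]_q/[n-1]_q)·(x - wt(P)) ≤ 1, where [a]_q = (q^a - 1)/(q-1). -/
open Module

/-- The total weight of the points of a subspace `S`. -/
noncomputable def subWeight {F V : Type} [Field F] [AddCommGroup V] [Module F V]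
    (wt : Submodule F V → ℝ) (S : Submodule F V) : ℝ :=
  ∑ᶠ P ∈ {P : Submodule F V | finrank F P = 1 ∧ P ≤ S}, wt P

/-- The `q`-analog `[a]_q = (q^a - 1)/(q - 1)`, as a real number. -/
noncomputable def qAna (q a : ℕ) : ℝ := ((q : ℝ) ^ a - 1) / ((q : ℝ) - 1)

/-- The Gaussian binomial coefficient `[a choose b]_q`, as a real number. -/
noncomputable def qBinom (q a b : ℕ) : ℝ :=
  ∏ i ∈ Finset.range b, qAna q (a - i) / qAna q (i + 1)


section qalg
variable {q : ℕ} (hq : 2 ≤ q)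
include hq

lemma qAna_pos {a : ℕ} (ha : 1 ≤ a) : 0 < qAna q a := by
  have hq1 : (1:ℝ) < (q:ℝ) := by exact_mod_cast hq
  apply div_pos
  · have : (1:ℝ) < (q:ℝ)^a := one_lt_pow₀ hq1 (by omega)
    linarith
  · linarith

lemma qBinom_pos {a b : ℕ} (hab : b ≤ a) : 0 < qBinom q a b := by
  apply Finset.prod_pos
  intro i hi
  rw [Finset.mem_range] at hi
  exact div_pos (qAna_pos hq (by omega)) (qAna_pos hq (by omega))

lemma qBinom_eq_div (a b : ℕ) :
    qBinom q a b = (∏ i ∈ Finset.range b, qAna q (a - i)) / ∏ i ∈ Finset.range b, qAna q (i+1) := by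
  rw [qBinom, Finset.prod_div_distrib]

lemma qBinom_succ_succ (a b : ℕ) :
    qBinom q (a+1) (b+1) = qAna q (a+1) / qAna q (b+1) * qBinom q a b := by
  rw [qBinom_eq_div hq, qBinom_eq_div hq]
  rw [Finset.prod_range_succ' (fun i => qAna q (a+1-i)) b, Finset.prod_range_succ]
  have h1 : ∀ i, a + 1 - (i+1) = a - i := fun i => by omega
  simp only [h1, Nat.sub_zero]
  field_simp

lemma cast_prod_sub (c : ℕ) (b : ℕ) (hbc : b ≤ c) :
    ((∏ i ∈ Finset.range b, (q^c - q^i) : ℕ) : ℝ) = ∏ i ∈ Finset.range b, ((q:ℝ)^c - (q:ℝ)^i) := by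
  rw [Nat.cast_prod]
  apply Finset.prod_congr rfl
  intro i hi
  rw [Finset.mem_range] at hi
  have : q^i ≤ q^c := Nat.pow_le_pow_right (by omega) (by omega)
  push_cast [Nat.cast_sub this]
  ring

lemma prod_sub_eq (c b : ℕ) (hbc : b ≤ c) :
    ∏ i ∈ Finset.range b, ((q:ℝ)^c - (q:ℝ)^i)
      = (∏ i ∈ Finset.range b, (q:ℝ)^i * ((q:ℝ) - 1)) * ∏ i ∈ Finset.range b, qAna q (c - i) := by
  rw [← Finset.prod_mul_distrib]
  apply Finset.prod_congr rfl
  intro i hi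
  rw [Finset.mem_range] at hi
  have hq1 : (1:ℝ) < (q:ℝ) := by exact_mod_cast hq
  have hqne : (q:ℝ) - 1 ≠ 0 := by linarith
  rw [qAna]
  have hpow : (q:ℝ)^i * (q:ℝ)^(c-i) = (q:ℝ)^c := by
    rw [← pow_add]; congr 1; omega
  field_simp
  nlinarith [hpow]

lemma den_eq_num (b : ℕ) :
    ∏ i ∈ Finset.range b, qAna q (b - i) = ∏ i ∈ Finset.range b, qAna q (i+1) := by
  rw [← Finset.prod_range_reflect (fun i => qAna q (i+1)) b]
  apply Finset.prod_congr rfl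
  intro i hi
  rw [Finset.mem_range] at hi
  congr 1
  omega

/-- Key identity: `qBinom q a b * ∏ (q^b - q^i) = ∏ (q^a - q^i)` in ℝ. -/
lemma qBinom_mul_prod {a b : ℕ} (hab : b ≤ a) :
    qBinom q a b * ∏ i ∈ Finset.range b, ((q:ℝ)^b - (q:ℝ)^i)
      = ∏ i ∈ Finset.range b, ((q:ℝ)^a - (q:ℝ)^i) := by
  rw [prod_sub_eq hq b b le_rfl, prod_sub_eq hq a b hab, den_eq_num hq, qBinom_eq_div hq]
  have hden : ∏ i ∈ Finset.range b, qAna q (i+1) ≠ 0 := by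
    apply ne_of_gt
    apply Finset.prod_pos
    intro i _
    exact qAna_pos hq (by omega)
  field_simp
  ring

end qalg
open Module

section count
variable {K V : Type} [Field K] [Fintype K] [AddCommGroup V] [Module K V]
  [FiniteDimensional K V] [Finite V]

local notation "q" => Fintype.card K
local notation "n" => finrank K V

/-- Fiber equivalence: linearly independent j-tuples with span S ≃ LI j-tuples in S. -/
noncomputable def fiberEquiv (j : ℕ) (S : Submodule K V) (hS : finrank K S = j) :
    {s : {s : Fin j → V // LinearIndependent K s} //
        Submodule.span K (Set.range s.1) = S} ≃ {t : Fin j → S // LinearIndependent K t} where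
  toFun s := ⟨fun i => ⟨s.1.1 i, by
      exact (le_of_eq s.2) (Submodule.subset_span (Set.mem_range_self i))⟩,
    by
      apply LinearIndependent.of_comp S.subtype
      exact s.1.2⟩
  invFun t := ⟨⟨fun i => (t.1 i : V), t.2.map' S.subtype (Submodule.ker_subtype S)⟩, by
      show Submodule.span K (Set.range (S.subtype ∘ t.1)) = S
      rw [Set.range_comp, ← Submodule.map_span]
      have hspan : Submodule.span K (Set.range t.1) = ⊤ := by
        apply Submodule.eq_top_of_finrank_eq
        rw [finrank_span_eq_card t.2, Fintype.card_fin, hS]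
      rw [hspan, Submodule.map_subtype_top]⟩
  left_inv s := by ext; rfl
  right_inv t := by ext; rfl

lemma card_subspaces_mul (j : ℕ) (hj : j ≤ n) :
    Nat.card {S : Submodule K V // finrank K S = j} * ∏ i : Fin j, (q ^ j - q ^ i.val)
      = ∏ i : Fin j, (q ^ n - q ^ i.val) := by
  classical
  have key := card_linearIndependent (K := K) (V := V) hj
  rw [← key]
  let f : {s : Fin j → V // LinearIndependent K s} → {S : Submodule K V // finrank K S = j} :=
    fun s => ⟨Submodule.span K (Set.range s.1), by
      rw [finrank_span_eq_card s.2, Fintype.card_fin]⟩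
  haveI : Finite (Submodule K V) :=
    Finite.of_injective (fun S => (S : Set V)) fun _ _ h => SetLike.coe_injective h
  haveI : Fintype (Submodule K V) := Fintype.ofFinite _
  haveI : ∀ S : {S : Submodule K V // finrank K S = j}, Fintype {s // f s = S} :=
    fun S => Fintype.ofFinite _
  have e := Equiv.sigmaFiberEquiv f
  rw [← Nat.card_congr e]
  have hsig : Nat.card ((S : {S : Submodule K V // finrank K S = j}) × {s // f s = S})
      = ∑ S : {S : Submodule K V // finrank K S = j}, Nat.card {s // f s = S} := by
    rw [Nat.card_eq_fintype_card, Fintype.card_sigma]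
    exact Finset.sum_congr rfl fun S _ => Nat.card_eq_fintype_card.symm
  rw [hsig]
  have hfib : ∀ S : {S : Submodule K V // finrank K S = j},
      Nat.card {s // f s = S} = ∏ i : Fin j, (q ^ j - q ^ i.val) := by
    intro S
    have e2 : {s // f s = S} ≃ {t : Fin j → S.1 // LinearIndependent K t} := by
      refine (Equiv.subtypeEquivRight ?_).trans (fiberEquiv j S.1 S.2)
      intro s
      constructor
      · intro h; exact congrArg Subtype.val h
      · intro h; exact Subtype.ext h
    rw [Nat.card_congr e2]
    have : FiniteDimensional K S.1 := inferInstance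
    have := card_linearIndependent (K := K) (V := S.1) (k := j) (le_of_eq S.2.symm)
    rw [this]
    apply Finset.prod_congr rfl
    intro i _
    rw [S.2]
  rw [Finset.sum_congr rfl (fun S _ => hfib S), Finset.sum_const, Finset.card_univ,
    smul_eq_mul, Nat.card_eq_fintype_card]
end count

section count2
variable {K V : Type} [Field K] [Fintype K] [AddCommGroup V] [Module K V]
  [FiniteDimensional K V]

lemma finrank_comap_mkQ (P : Submodule K V) (T : Submodule K (V ⧸ P)) :
    finrank K (T.comap P.mkQ) = finrank K T + finrank K P := by
  set S := T.comap P.mkQ with hSdef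
  have hPS : P ≤ S := fun x hx => by
    simp [hSdef, Submodule.mem_comap, (Submodule.Quotient.mk_eq_zero P).2 hx]
  let f : S →ₗ[K] V ⧸ P := P.mkQ ∘ₗ S.subtype
  have hrange : LinearMap.range f = T := by
    rw [LinearMap.range_comp, Submodule.range_subtype]
    exact Submodule.map_comap_eq_of_surjective (Submodule.mkQ_surjective P) T
  have hker : LinearMap.ker f = P.comap S.subtype := by
    rw [LinearMap.ker_comp, Submodule.ker_mkQ]
  have h1 := LinearMap.finrank_range_add_finrank_ker f
  rw [hrange, hker] at h1
  have h2 : finrank K (P.comap S.subtype) = finrank K P :=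
    (Submodule.comapSubtypeEquivOfLe hPS).finrank_eq
  rw [h2] at h1
  have h3 : finrank K S = finrank K (T.comap P.mkQ) := rfl
  omega

/-- Subspaces of dim `j + dim P` containing `P` correspond to `j`-dim subspaces of `V ⧸ P`. -/
noncomputable def aboveEquiv (P : Submodule K V) (j : ℕ) :
    {T : Submodule K (V ⧸ P) // finrank K T = j}
      ≃ {S : Submodule K V // finrank K S = j + finrank K P ∧ P ≤ S} := by
  let e1 := (Submodule.comapMkQRelIso P).toEquiv
  refine (Equiv.subtypeEquiv (q := fun S' : {p' : Submodule K V // P ≤ p'} =>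
      finrank K S'.1 = j + finrank K P) e1 ?_).trans
    ((Equiv.subtypeSubtypeEquivSubtypeInter (fun p' : Submodule K V => P ≤ p')
      (fun S => finrank K S = j + finrank K P)).trans (Equiv.subtypeEquivRight ?_))
  · intro T
    have h : finrank K ((e1 T : {p' : Submodule K V // P ≤ p'}) : Submodule K V)
        = finrank K T + finrank K P := finrank_comap_mkQ P T
    constructor <;> (intro h2; omega)
  · intro S
    exact and_comm

lemma card_above (P : Submodule K V) (j : ℕ) :
    Nat.card {S : Submodule K V // finrank K S = j + finrank K P ∧ P ≤ S}
      = Nat.card {T : Submodule K (V ⧸ P) // finrank K T = j} :=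
  (Nat.card_congr (aboveEquiv P j)).symm

end count2

section count3
variable {K V : Type} [Field K] [Fintype K] [AddCommGroup V] [Module K V]
  [FiniteDimensional K V] [Finite V]

lemma card_subspaces_real (hq2 : 2 ≤ Fintype.card K) {j : ℕ} (hj : j ≤ finrank K V) :
    (Nat.card {S : Submodule K V // finrank K S = j} : ℝ)
      = qBinom (Fintype.card K) (finrank K V) j := by
  set q := Fintype.card K
  set n := finrank K V
  have h := card_subspaces_mul (K := K) (V := V) j hj
  rw [Fin.prod_univ_eq_prod_range (fun i => q^j - q^i) j, Fin.prod_univ_eq_prod_range (fun i => q^n - q^i) j] at h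
  have hcast := congrArg (fun m : ℕ => (m : ℝ)) h
  simp only [Nat.cast_mul] at hcast
  rw [cast_prod_sub hq2 j j le_rfl, cast_prod_sub hq2 n j hj] at hcast
  have hkey := qBinom_mul_prod hq2 hj
  have hpos : 0 < ∏ i ∈ Finset.range j, ((q:ℝ)^j - (q:ℝ)^i) := by
    apply Finset.prod_pos
    intro i hi
    rw [Finset.mem_range] at hi
    have : (q:ℝ)^i < (q:ℝ)^j := by
      apply pow_lt_pow_right₀ (by exact_mod_cast hq2) hi
    linarith
  have := hcast.trans hkey.symm
  exact mul_right_cancel₀ (ne_of_gt hpos) this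

lemma card_above_real (hq2 : 2 ≤ Fintype.card K) (W : Submodule K V) (j : ℕ)
    (hj : j + finrank K W ≤ finrank K V) :
    (Nat.card {S : Submodule K V // finrank K S = j + finrank K W ∧ W ≤ S} : ℝ)
      = qBinom (Fintype.card K) (finrank K V - finrank K W) j := by
  haveI : Finite (V ⧸ W) := Finite.of_surjective _ (Submodule.mkQ_surjective W)
  rw [card_above]
  have hq : finrank K (V ⧸ W) = finrank K V - finrank K W := by
    have := Submodule.finrank_quotient_add_finrank W
    omega
  have hjq : j ≤ finrank K (V ⧸ W) := by omega
  rw [card_subspaces_real hq2 hjq, hq]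

end count3

/-- Bounds on point weights of a Boolean degree 1 function on `J_q(n,k)` of size
`x·[n-1 choose k-1]_q`. -/
theorem stmt_4 (q n k : ℕ) (F V : Type) [Field F] [Fintype F] (hq : Fintype.card F = q)
    [AddCommGroup V] [Module F V] (hk : 2 ≤ k) (hn : 2 * k ≤ n) (hdim : finrank F V = n)
    (wt : Submodule F V → ℝ)
    (hbool : ∀ S : Submodule F V, finrank F S = k →
      subWeight wt S = 0 ∨ subWeight wt S = 1)
    (x : ℝ)
    (hsize : (Nat.card {S : Submodule F V // finrank F S = k ∧ subWeight wt S = 1} : ℝ)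
      = x * qBinom q (n - 1) (k - 1)) :
    ∀ P : Submodule F V, finrank F P = 1 →
      0 ≤ wt P + qAna q (k - 1) / qAna q (n - 1) * (x - wt P) ∧
      wt P + qAna q (k - 1) / qAna q (n - 1) * (x - wt P) ≤ 1 := by
  subst hq hdim
  intro P hP
  classical
  set q := Fintype.card F with hqdef
  set n := finrank F V with hndef
  have hq2 : 2 ≤ q := Fintype.one_lt_card
  haveI : FiniteDimensional F V := FiniteDimensional.of_finrank_pos (by omega)
  haveI : Finite V := Finite.of_equiv _ (Module.finBasis F V).equivFun.symm.toEquiv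
  haveI : Finite (Submodule F V) :=
    Finite.of_injective (fun S => (S : Set V)) fun _ _ h => SetLike.coe_injective h
  haveI : Fintype (Submodule F V) := Fintype.ofFinite _
  set pts : Finset (Submodule F V) := Finset.univ.filter (fun Q => finrank F Q = 1) with hpts
  set 𝒦 : Finset (Submodule F V) := Finset.univ.filter (fun S : Submodule F V => finrank F S = k) with h𝒦
  set A : ℝ := qBinom q (n - 1) (k - 1) with hA
  set B : ℝ := qBinom q (n - 2) (k - 2) with hB
  -- subWeight as a Finset sum
  have subW : ∀ S : Submodule F V,
      subWeight wt S = ∑ Q ∈ pts.filter (fun Q => Q ≤ S), wt Q := by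
    intro S
    rw [subWeight]
    have hset : {Q : Submodule F V | finrank F Q = 1 ∧ Q ≤ S}
        = ↑(pts.filter (fun Q => Q ≤ S)) := by
      ext Q; simp [hpts]
    rw [hset, finsum_mem_coe_finset]
  -- double counting
  have hdc : ∀ 𝒜 : Finset (Submodule F V), ∑ S ∈ 𝒜, subWeight wt S
      = ∑ Q ∈ pts, ((𝒜.filter (fun S => Q ≤ S)).card : ℝ) * wt Q := by
    intro 𝒜
    simp_rw [subW, Finset.sum_filter]
    rw [Finset.sum_comm]
    refine Finset.sum_congr rfl fun Q _ => ?_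
    rw [← Finset.sum_filter, Finset.sum_const, nsmul_eq_mul]
  -- sum of subWeights equals count of weight-1 spaces
  have hcount : ∀ 𝒜 : Finset (Submodule F V), (∀ S ∈ 𝒜, finrank F S = k) →
      ∑ S ∈ 𝒜, subWeight wt S
        = ((𝒜.filter (fun S => subWeight wt S = 1)).card : ℝ) := by
    intro 𝒜 h𝒜
    have hterm : ∀ S ∈ 𝒜, subWeight wt S = if subWeight wt S = 1 then (1:ℝ) else 0 := by
      intro S hS
      rcases hbool S (h𝒜 S hS) with h | h
      · rw [h]; simp [h]
      · rw [h]; simp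
    rw [Finset.sum_congr rfl hterm, Finset.sum_boole]
  -- generic Finset card to Nat.card
  have hcard_nat : ∀ p : Submodule F V → Prop, ∀ _ : DecidablePred p,
      (Finset.univ.filter p).card = Nat.card {S // p S} := by
    intro p hp
    rw [Nat.card_eq_fintype_card, Fintype.card_subtype]
  -- count of k-spaces through a point
  have hptcount : ∀ Q : Submodule F V, finrank F Q = 1 →
      (((𝒦.filter (fun S => Q ≤ S)).card : ℕ) : ℝ) = A := by
    intro Q hQ
    have h1 : 𝒦.filter (fun S => Q ≤ S)
        = Finset.univ.filter (fun S : Submodule F V => finrank F S = k ∧ Q ≤ S) := by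
      rw [h𝒦, Finset.filter_filter]
    rw [h1, hcard_nat _ _]
    have hkQ : (k - 1) + finrank F Q = k := by rw [hQ]; omega
    have hNe : Nat.card {S : Submodule F V // finrank F S = k ∧ Q ≤ S}
        = Nat.card {S : Submodule F V // finrank F S = (k-1) + finrank F Q ∧ Q ≤ S} :=
      Nat.card_congr (Equiv.subtypeEquivRight (fun S => by rw [hkQ]))
    rw [hNe, card_above_real hq2 Q (k-1) (by omega), hQ, hA]
  -- count of k-spaces through two distinct points
  have h2count : ∀ Q : Submodule F V, finrank F Q = 1 → Q ≠ P →
      (((𝒦.filter (fun S => P ≤ S ∧ Q ≤ S)).card : ℕ) : ℝ) = B := by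
    intro Q hQ hQP
    have hinf : P ⊓ Q = ⊥ := by
      by_contra hne
      have hle : finrank F (P ⊓ Q : Submodule F V) ≤ 1 := by
        rw [← hP]; exact Submodule.finrank_mono inf_le_left
      have h0 : finrank F (P ⊓ Q : Submodule F V) ≠ 0 := by
        intro h0
        exact hne (Submodule.finrank_eq_zero.mp h0)
      have h1 : finrank F (P ⊓ Q : Submodule F V) = 1 := by omega
      have hPQ : P ⊓ Q = P := Submodule.eq_of_le_of_finrank_le inf_le_left (by omega)
      have hPleQ : P ≤ Q := hPQ ▸ inf_le_right
      exact hQP (Submodule.eq_of_le_of_finrank_le hPleQ (by omega)).symm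
    have hsup : finrank F (P ⊔ Q : Submodule F V) = 2 := by
      have := Submodule.finrank_sup_add_finrank_inf_eq P Q
      rw [hinf, hP, hQ] at this
      simp [finrank_bot] at this
      omega
    have h1 : 𝒦.filter (fun S => P ≤ S ∧ Q ≤ S)
        = Finset.univ.filter (fun S : Submodule F V => finrank F S = (k-2) + finrank F (P ⊔ Q : Submodule F V)
            ∧ P ⊔ Q ≤ S) := by
      rw [h𝒦, Finset.filter_filter]
      apply Finset.filter_congr
      intro S _
      rw [hsup, sup_le_iff]
      constructor
      · rintro ⟨h1, h2, h3⟩; exact ⟨by omega, h2, h3⟩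
      · rintro ⟨h1, h2, h3⟩; exact ⟨by omega, h2, h3⟩
    rw [h1, hcard_nat _ _, card_above_real hq2 (P ⊔ Q) (k-2) (by omega), hsup, hB]
  -- positivity
  have hApos : 0 < A := qBinom_pos hq2 (by omega)
  have hk1pos : 0 < qAna q (k-1) := qAna_pos hq2 (by omega)
  have hn1pos : 0 < qAna q (n-1) := qAna_pos hq2 (by omega)
  -- B / A ratio
  have hBA : B * qAna q (n-1) = A * qAna q (k-1) := by
    have h := qBinom_succ_succ (q := q) hq2 (n-2) (k-2)
    have hn1 : n - 2 + 1 = n - 1 := by omega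
    have hk1 : k - 2 + 1 = k - 1 := by omega
    rw [hn1, hk1] at h
    rw [hA, hB, h]
    field_simp
  -- Step 1 & 2: total weight equals x
  have hP_mem : P ∈ pts := by rw [hpts]; simp [hP]
  set Wtot : ℝ := ∑ Q ∈ pts, wt Q with hWtot
  have hstep1 : ∑ S ∈ 𝒦, subWeight wt S = x * A := by
    rw [hcount 𝒦 (fun S hS => by rw [h𝒦] at hS; simpa using hS)]
    have h1 : 𝒦.filter (fun S => subWeight wt S = 1)
        = Finset.univ.filter (fun S : Submodule F V => finrank F S = k ∧ subWeight wt S = 1) := by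
      rw [h𝒦, Finset.filter_filter]
    rw [h1, hcard_nat _ _, hsize]
  have hstep2 : ∑ S ∈ 𝒦, subWeight wt S = A * Wtot := by
    rw [hdc 𝒦, hWtot, Finset.mul_sum]
    refine Finset.sum_congr rfl fun Q hQ => ?_
    rw [hpts] at hQ
    rw [hptcount Q (by simpa using hQ)]
  have hWx : Wtot = x := by
    have : A * Wtot = A * x := by rw [← hstep2, hstep1]; ring
    exact mul_left_cancel₀ (ne_of_gt hApos) this
  -- Step 3: sum over k-spaces through P
  set 𝒦P : Finset (Submodule F V) := 𝒦.filter (fun S => P ≤ S) with h𝒦P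
  set Y : ℝ := ∑ S ∈ 𝒦P, subWeight wt S with hY
  have hstep3 : Y = A * wt P + B * (x - wt P) := by
    rw [hY, hdc 𝒦P]
    have hterm : ∀ Q ∈ pts, ((𝒦P.filter (fun S => Q ≤ S)).card : ℝ) * wt Q
        = (if Q = P then A else B) * wt Q := by
      intro Q hQ
      rw [hpts] at hQ
      have hQ1 : finrank F Q = 1 := by simpa using hQ
      congr 1
      have hff : 𝒦P.filter (fun S => Q ≤ S) = 𝒦.filter (fun S => P ≤ S ∧ Q ≤ S) := by
        rw [h𝒦P, Finset.filter_filter]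
      by_cases hQP : Q = P
      · subst hQP
        rw [if_pos rfl, ← hptcount Q hQ1]
        congr 1
        rw [hff]
        congr 1
        ext S
        simp [Finset.mem_filter]
      · rw [if_neg hQP, ← h2count Q hQ1 hQP, hff]
    rw [Finset.sum_congr rfl hterm]
    rw [← Finset.add_sum_erase _ _ hP_mem, if_pos rfl]
    have hrest : ∑ Q ∈ pts.erase P, (if Q = P then A else B) * wt Q
        = B * (Wtot - wt P) := by
      have : ∀ Q ∈ pts.erase P, (if Q = P then A else B) * wt Q = B * wt Q := by
        intro Q hQ
        rw [if_neg (Finset.ne_of_mem_erase hQ)]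
      rw [Finset.sum_congr rfl this, ← Finset.mul_sum]
      congr 1
      rw [hWtot, ← Finset.add_sum_erase _ _ hP_mem]
      ring
    rw [hrest, hWx]
  -- Step 4: 0 ≤ Y ≤ A
  have h𝒦Prank : ∀ S ∈ 𝒦P, finrank F S = k := by
    intro S hS
    rw [h𝒦P, Finset.mem_filter, h𝒦, Finset.mem_filter] at hS
    exact hS.1.2
  have hYnonneg : 0 ≤ Y := by
    rw [hY, hcount 𝒦P h𝒦Prank]
    positivity
  have hYle : Y ≤ A := by
    rw [hY, hcount 𝒦P h𝒦Prank]
    have h1 : (𝒦P.filter (fun S => subWeight wt S = 1)).card ≤ 𝒦P.card :=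
      Finset.card_filter_le _ _
    have h2 : ((𝒦P.card : ℕ) : ℝ) = A := by
      rw [h𝒦P]; exact hptcount P hP
    calc ((𝒦P.filter (fun S => subWeight wt S = 1)).card : ℝ) ≤ (𝒦P.card : ℝ) := by
          exact_mod_cast h1
      _ = A := h2
  -- conclude
  set E : ℝ := wt P + qAna q (k - 1) / qAna q (n - 1) * (x - wt P) with hE
  have hYE : Y = A * E := by
    rw [hstep3, hE]
    have hB' : B = A * (qAna q (k-1) / qAna q (n-1)) := by
      field_simp
      linarith [hBA]
    rw [hB']
    ring
  constructor
  · nlinarith [hYnonneg, hYE, hApos]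
  · nlinarith [hYle, hYE, hApos]
end

section
/- For every prime power q and positive integers k, δ, there exists N such that for every F_q-vector space V of dimension ≥ N, every hyperplane H of V, and every coloring of the points of V not in H with δ colors, there is a k-dimensional subspace K ⊄ H all of whose points outside H have the same color. -/
open Module

open Combinatorics Submodule in

/-- Geometric core: a combinatorial subspace inside the affine hyperplane `φ = 1`
spans (together with nothing else) a linear subspace `K` of dimension `r + 1`, whose
points outside `ker φ` are exactly the spans of the points of the combinatorial subspace. -/
theorem aux_glr {F V : Type} [Field F] [AddCommGroup V] [Module F V] [FiniteDimensional F V]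
    (r m : ℕ) (φ : V →ₗ[F] F) (e : V) (he : φ e = 1)
    (b : Fin m → V) (hb : LinearIndependent F b) (hbH : ∀ j, φ (b j) = 0)
    (l : Combinatorics.Subspace (Fin r) F (Fin m)) :
    ∃ K : Submodule F V, finrank F K = r + 1 ∧ ¬ K ≤ LinearMap.ker φ ∧
      ∀ P : Submodule F V, P ≤ K → finrank F P = 1 → ¬ P ≤ LinearMap.ker φ →
        ∃ y : Fin r → F, P = Submodule.span F {e + ∑ j, (l y j) • b j} := by
  classical
  -- the coefficient linear maps
  set cf : Fin m → ((Fin r → F) →ₗ[F] F) := fun j =>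
    (l.idxFun j).elim (fun _ => (0 : (Fin r → F) →ₗ[F] F)) (fun i => LinearMap.proj i) with hcf
  set L : (Fin r → F) →ₗ[F] V := ∑ j, (cf j).smulRight (b j) with hL
  have hLapp : ∀ y, L y = ∑ j, (cf j y) • b j := by
    intro y
    simp [hL, LinearMap.sum_apply]
  set v : (Fin r → F) → V := fun y => e + ∑ j, (l y j) • b j with hv
  have hvy : ∀ y, v y = v 0 + L y := by
    intro y
    have : ∀ j, l y j = l 0 j + cf j y := by
      intro j
      rcases h : l.idxFun j with a | i
      · simp [Subspace.apply_inl h, hcf, h]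
      · simp [Subspace.apply_inr h, hcf, h]
    simp only [hv, hLapp]
    rw [add_assoc, ← Finset.sum_add_distrib]
    congr 1
    apply Finset.sum_congr rfl
    intro j _
    rw [this j, add_smul]
  have hφL : ∀ y, φ (L y) = 0 := by
    intro y
    rw [hLapp]
    simp [hbH]
  have hφv : ∀ y, φ (v y) = 1 := by
    intro y
    simp only [hv, map_add, map_sum, map_smul, hbH, smul_eq_mul, mul_zero, Finset.sum_const_zero,
      he, add_zero]
  have hv0 : v 0 ≠ 0 := fun h => by simpa [h] using hφv 0
  have hLinj : Function.Injective L := by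
    rw [← LinearMap.ker_eq_bot]
    rw [LinearMap.ker_eq_bot']
    intro y hy
    rw [hLapp] at hy
    have hall := Fintype.linearIndependent_iff.mp hb _ hy
    funext i
    obtain ⟨j, hj⟩ := l.proper i
    have := hall j
    simpa [hcf, hj] using this
  set K : Submodule F V := LinearMap.range L ⊔ Submodule.span F {v 0} with hK
  have hvmem : ∀ y, v y ∈ K := by
    intro y
    rw [hvy y]
    exact add_mem (Submodule.mem_sup_right (Submodule.mem_span_singleton_self _))
      (Submodule.mem_sup_left (LinearMap.mem_range_self _ _))
  have hdisj : LinearMap.range L ⊓ Submodule.span F {v 0} = ⊥ := by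
    rw [eq_bot_iff]
    rintro x ⟨⟨y, rfl⟩, hx2⟩
    obtain ⟨t, ht⟩ := Submodule.mem_span_singleton.mp hx2
    have h1 : φ (L y) = 0 := hφL y
    have h2 : φ (t • v 0) = t := by rw [map_smul, hφv, smul_eq_mul, mul_one]
    rw [← ht] at h1
    rw [h1] at h2
    rw [← ht, ← h2, zero_smul]
    exact Submodule.zero_mem _
  refine ⟨K, ?_, ?_, ?_⟩
  · have := Submodule.finrank_sup_add_finrank_inf_eq (LinearMap.range L) (Submodule.span F {v 0})
    rw [hdisj] at this
    rw [LinearMap.finrank_range_of_inj hLinj, Module.finrank_fin_fun,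
      finrank_span_singleton hv0] at this
    simpa [hK] using this
  · intro h
    have := h (hvmem 0)
    rw [LinearMap.mem_ker, hφv] at this
    exact one_ne_zero this
  · intro P hPK hP1 hPH
    obtain ⟨w, hwP, hwH⟩ := SetLike.not_le_iff_exists.mp hPH
    have hφw : φ w ≠ 0 := fun h => hwH (LinearMap.mem_ker.mpr h)
    have hw0 : w ≠ 0 := fun h => hφw (by simp [h])
    have hPw : P = Submodule.span F {w} := by
      symm
      apply Submodule.eq_of_le_of_finrank_le
        ((Submodule.span_singleton_le_iff_mem _ _).mpr hwP)
      rw [hP1, finrank_span_singleton hw0]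
    obtain ⟨a, ha, c, hc, hw⟩ := Submodule.mem_sup.mp (hPK hwP)
    obtain ⟨z, rfl⟩ := ha
    obtain ⟨s, rfl⟩ := Submodule.mem_span_singleton.mp hc
    have hφws : φ w = s := by
      rw [← hw, map_add, hφL, map_smul, hφv, zero_add, smul_eq_mul, mul_one]
    refine ⟨(φ w)⁻¹ • z, ?_⟩
    have key : (φ w)⁻¹ • w = v ((φ w)⁻¹ • z) := by
      have hs0 : s ≠ 0 := hφws ▸ hφw
      rw [hvy, map_smul, hφws, ← hw, smul_add, smul_smul, inv_mul_cancel₀ hs0, one_smul,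
        add_comm]
    rw [hPw]
    show Submodule.span F {w} = Submodule.span F {v ((φ w)⁻¹ • z)}
    rw [← key, Submodule.span_singleton_smul_eq (IsUnit.mk0 _ (inv_ne_zero hφw)) w]

/-- Affine Graham–Leeb–Rothschild theorem: for every prime power `q` and positive
integers `k`, `δ`, there is `N` such that for every `F_q`-vector space of dimension
at least `N`, every hyperplane `H`, and every `δ`-coloring of the points outside
`H`, there is a `k`-space `K ⊄ H` all of whose points outside `H` get the same
color. -/
theorem stmt_10 (q k δ : ℕ) (hq : IsPrimePow q) (hk : 0 < k) (hδ : 0 < δ) :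
    ∃ N : ℕ, ∀ (F V : Type) [Field F] [Fintype F] [AddCommGroup V] [Module F V],
      Fintype.card F = q → ∀ n : ℕ, finrank F V = n → N ≤ n →
      ∀ H : Submodule F V, finrank F H = n - 1 →
      ∀ Δ : {P : Submodule F V // finrank F P = 1 ∧ ¬ P ≤ H} → Fin δ,
        ∃ K : Submodule F V, finrank F K = k ∧ ¬ K ≤ H ∧
          ∀ P₁ P₂ : {P : Submodule F V // finrank F P = 1 ∧ ¬ P ≤ H},
            (P₁ : Submodule F V) ≤ K → (P₂ : Submodule F V) ≤ K → Δ P₁ = Δ P₂ := by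
  classical
  obtain ⟨m, hm⟩ :=
    Combinatorics.Subspace.exists_mono_in_high_dimension_fin (Fin q) (Fin δ) (Fin (k - 1))
  refine ⟨m + 1, ?_⟩
  intro F V _ _ _ _ hF n hn hNn H hH Δ
  have hn1 : 1 ≤ n := le_trans (Nat.le_add_left 1 m) hNn
  have hfd : FiniteDimensional F V := FiniteDimensional.of_finrank_pos (by omega : 0 < finrank F V)
  -- a linear functional with kernel `H`
  have hq1 : finrank F (V ⧸ H) = 1 := by
    have := Submodule.finrank_quotient_add_finrank H
    rw [hn, hH] at this
    omega
  let ψ : (V ⧸ H) ≃ₗ[F] F := LinearEquiv.ofFinrankEq _ _ (by rw [hq1, finrank_self])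
  let φ : V →ₗ[F] F := ψ.toLinearMap ∘ₗ H.mkQ
  have hker : LinearMap.ker φ = H := by
    rw [LinearMap.ker_comp, LinearEquiv.ker, Submodule.comap_bot, Submodule.ker_mkQ]
  -- a vector `e` with `φ e = 1`
  have hHne : ¬ (⊤ : Submodule F V) ≤ H := by
    intro h
    have h2 : (⊤ : Submodule F V) = H := le_antisymm h le_top
    rw [← h2, finrank_top, hn] at hH
    omega
  obtain ⟨x, -, hxH⟩ := SetLike.not_le_iff_exists.mp hHne
  have hφx : φ x ≠ 0 := fun h => hxH (hker ▸ LinearMap.mem_ker.mpr h)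
  set e : V := (φ x)⁻¹ • x with he_def
  have he : φ e = 1 := by rw [he_def, map_smul, smul_eq_mul, inv_mul_cancel₀ hφx]
  -- linearly independent vectors in `H`
  have hmn : m ≤ n - 1 := by omega
  let emb : Fin m → Fin (finrank F H) := fun j => ⟨j, by rw [hH]; omega⟩
  have hembinj : Function.Injective emb := by
    intro a b hab
    simpa [emb, Fin.ext_iff] using hab
  let bb := Module.finBasis F H
  let b : Fin m → V := fun j => ((bb (emb j) : H) : V)
  have hb : LinearIndependent F b :=
    ((bb.linearIndependent.comp emb hembinj).map' H.subtype (Submodule.ker_subtype H))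
  have hbH : ∀ j, φ (b j) = 0 := by
    intro j
    have : b j ∈ H := (bb (emb j)).2
    rw [← hker] at this
    exact this
  -- the induced coloring of the affine hyperplane `φ = 1`
  have hpt : ∀ x : Fin m → F,
      finrank F (Submodule.span F {e + ∑ j, x j • b j}) = 1 ∧
        ¬ Submodule.span F {e + ∑ j, x j • b j} ≤ H := by
    intro x
    have hφu : φ (e + ∑ j, x j • b j) = 1 := by
      simp [map_sum, hbH, he]
    have hu0 : e + ∑ j, x j • b j ≠ 0 := fun h => by simp [h] at hφu
    refine ⟨finrank_span_singleton hu0, fun h => ?_⟩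
    have := h (Submodule.mem_span_singleton_self _)
    rw [← hker, LinearMap.mem_ker, hφu] at this
    exact one_ne_zero this
  let C : (Fin m → F) → Fin δ := fun x =>
    Δ ⟨Submodule.span F {e + ∑ j, x j • b j}, hpt x⟩
  let eqF : F ≃ Fin q := Fintype.equivFinOfCardEq hF
  obtain ⟨l₀, hl₀⟩ := hm fun x => C (eqF.symm ∘ x)
  let l : Combinatorics.Subspace (Fin (k - 1)) F (Fin m) :=
    l₀.reindex (Equiv.refl _) eqF.symm (Equiv.refl _)
  have hlm : l.IsMono C := by
    rw [Combinatorics.Subspace.reindex_isMono]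
    simpa [Function.comp_def] using hl₀
  obtain ⟨c, hc⟩ := hlm
  obtain ⟨K, hK1, hK2, hK3⟩ := aux_glr (k - 1) m φ e he b hb hbH l
  refine ⟨K, by rw [hK1]; omega, by rwa [← hker], ?_⟩
  intro P₁ P₂ h1 h2
  obtain ⟨y₁, hy₁⟩ := hK3 P₁ h1 P₁.2.1 (by rw [hker]; exact P₁.2.2)
  obtain ⟨y₂, hy₂⟩ := hK3 P₂ h2 P₂.2.1 (by rw [hker]; exact P₂.2.2)
  have e1 : Δ P₁ = C (l y₁) := by
    have : P₁ = ⟨Submodule.span F {e + ∑ j, (l y₁) j • b j}, hpt _⟩ := Subtype.ext hy₁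
    rw [this]
  have e2 : Δ P₂ = C (l y₂) := by
    have : P₂ = ⟨Submodule.span F {e + ∑ j, (l y₂) j • b j}, hpt _⟩ := Subtype.ext hy₂
    rw [this]
  rw [e1, e2, hc y₁, hc y₂]
end

section
/- Let q be a prime power, δ, k positive integers, and let n̄₀(k,δ,q) denote the least N such that every δ-coloring of the affine points (points of an N-dimensional F_q-space outside a fixed hyperplane) contains a monochromatic affine k-space. Then n̄₀(k+1, δ, q) > n̄₀(k, δ, q). -/
open Module

/-- `AffineRamsey q δ k N` says: for every `F_q`-vector space of dimension `N`,
every hyperplane `H`, and every `δ`-coloring of the points outside `H`, there is a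
`k`-space not contained in `H` all of whose points outside `H` have the same
color. -/
def AffineRamsey (q δ k N : ℕ) : Prop :=
  ∀ (F V : Type) [Field F] [Fintype F] [AddCommGroup V] [Module F V],
    Fintype.card F = q → finrank F V = N →
    ∀ H : Submodule F V, finrank F H = N - 1 →
    ∀ Δ : {P : Submodule F V // finrank F P = 1 ∧ ¬ P ≤ H} → Fin δ,
      ∃ K : Submodule F V, finrank F K = k ∧ ¬ K ≤ H ∧
        ∀ P₁ P₂ : {P : Submodule F V // finrank F P = 1 ∧ ¬ P ≤ H},
          (P₁ : Submodule F V) ≤ K → (P₂ : Submodule F V) ≤ K → Δ P₁ = Δ P₂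

section aux
variable {F V : Type} [Field F] [AddCommGroup V] [Module F V] [FiniteDimensional F V]

lemma point_gen (P : Submodule F V) (h : finrank F P = 1) :
    ∃ v : V, v ≠ 0 ∧ P = Submodule.span F {v} := by
  have hPb : P ≠ ⊥ := by intro hb; rw [hb, finrank_bot] at h; omega
  obtain ⟨v, hvP, hv0⟩ := Submodule.exists_mem_ne_zero_of_ne_bot hPb
  refine ⟨v, hv0, ?_⟩
  have h1 : Submodule.span F {v} ≤ P := Submodule.span_le.mpr (by simpa using hvP)
  have := finrank_span_singleton (K := F) hv0
  exact (Submodule.eq_of_le_of_finrank_eq h1 (by rw [this, h])).symm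

lemma finrank_sup_span_singleton' (p : Submodule F V) {x : V} (hx : x ∉ p) :
    finrank F (p ⊔ Submodule.span F {x} : Submodule F V) = finrank F p + 1 := by
  have hx0 : x ≠ 0 := fun h => hx (h ▸ p.zero_mem)
  have hinf : p ⊓ Submodule.span F {x} = ⊥ := by
    rw [eq_bot_iff]
    rintro y ⟨hyp, hys⟩
    obtain ⟨c, rfl⟩ := Submodule.mem_span_singleton.mp hys
    rcases eq_or_ne c 0 with rfl | hc
    · simp
    · exact absurd ((p.smul_mem_iff hc).mp hyp) hx
  have := Submodule.finrank_sup_add_finrank_inf_eq p (Submodule.span F {x})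
  rw [hinf, finrank_bot, finrank_span_singleton hx0] at this
  omega

lemma exists_between_fr (K : Submodule F V) :
    ∀ (n : ℕ) (p : Submodule F V), p ≤ K → ∀ d : ℕ, finrank F p ≤ d → d ≤ finrank F K →
      d - finrank F p = n → ∃ L, p ≤ L ∧ L ≤ K ∧ finrank F L = d := by
  intro n
  induction n with
  | zero => intro p hpK d h1 h2 h3; exact ⟨p, le_refl _, hpK, by omega⟩
  | succ n ih =>
    intro p hpK d h1 h2 h3
    have hlt : finrank F p < finrank F K := by omega
    have hne : ¬ K ≤ p := fun hle => absurd (Submodule.finrank_mono hle) (by omega)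
    obtain ⟨x, hxK, hxp⟩ := SetLike.not_le_iff_exists.mp hne
    have hsle : p ⊔ Submodule.span F {x} ≤ K := by
      refine sup_le hpK (Submodule.span_le.mpr ?_); simpa using hxK
    have hfr := finrank_sup_span_singleton' p hxp
    obtain ⟨L, hL1, hL2, hL3⟩ := ih (p ⊔ Submodule.span F {x}) hsle d (by omega) h2 (by omega)
    exact ⟨L, le_trans le_sup_left hL1, hL2, hL3⟩

lemma finrank_prod_top (H : Submodule F V) :
    finrank F (H.prod (⊤ : Submodule F F)) = finrank F H + 1 := by
  let e : (H × F) →ₗ[F] (V × F) := H.subtype.prodMap LinearMap.id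
  have hinj : Function.Injective e :=
    Function.Injective.prodMap H.injective_subtype (fun a b h => h)
  have hrange : LinearMap.range e = H.prod ⊤ := by
    ext x
    constructor
    · rintro ⟨⟨h, t⟩, rfl⟩; exact ⟨h.2, trivial⟩
    · rintro ⟨hx1, -⟩; exact ⟨(⟨x.1, hx1⟩, x.2), rfl⟩
  have := LinearEquiv.finrank_eq (LinearEquiv.ofInjective e hinj)
  rw [hrange] at this
  rw [← this, finrank_prod, finrank_self]
end aux

lemma step {q δ k m : ℕ} (hk : 0 < k) (hm : 0 < m)
    (hR : AffineRamsey q δ (k + 1) (m + 1)) : AffineRamsey q δ k m := by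
  intro F V _ _ _ _ hcard hV H hH Δ
  haveI : FiniteDimensional F V := FiniteDimensional.of_finrank_pos (by omega)
  have hV' : finrank F (V × F) = m + 1 := by rw [finrank_prod, finrank_self, hV]
  set H' : Submodule F (V × F) := H.prod ⊤ with hH'def
  have hH' : finrank F H' = (m + 1) - 1 := by
    rw [hH'def, finrank_prod_top, hH]; omega
  have key : ∀ P' : Submodule F (V × F), finrank F P' = 1 → ¬ P' ≤ H' →
      finrank F (P'.map (LinearMap.fst F V F)) = 1 ∧
        ¬ P'.map (LinearMap.fst F V F) ≤ H := by
    intro P' h1 h2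
    obtain ⟨x, hxP, hxH⟩ := SetLike.not_le_iff_exists.mp h2
    have hx1 : x.1 ∉ H := fun hmem => hxH ⟨hmem, trivial⟩
    have hx1mem : x.1 ∈ P'.map (LinearMap.fst F V F) := ⟨x, hxP, rfl⟩
    have hnle : ¬ P'.map (LinearMap.fst F V F) ≤ H := fun hle => hx1 (hle hx1mem)
    have hne : P'.map (LinearMap.fst F V F) ≠ ⊥ := by
      intro hb
      rw [hb] at hx1mem
      exact hx1 ((Submodule.mem_bot F).mp hx1mem ▸ H.zero_mem)
    have hle1 : finrank F (P'.map (LinearMap.fst F V F)) ≤ 1 :=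
      h1 ▸ Submodule.finrank_map_le _ _
    have hge1 : finrank F (P'.map (LinearMap.fst F V F)) ≠ 0 := by
      intro h0
      exact hne (Submodule.finrank_eq_zero.mp h0)
    exact ⟨by omega, hnle⟩
  let toPt : {P : Submodule F (V × F) // finrank F P = 1 ∧ ¬ P ≤ H'} →
      {P : Submodule F V // finrank F P = 1 ∧ ¬ P ≤ H} :=
    fun P' => ⟨P'.1.map (LinearMap.fst F V F), (key P'.1 P'.2.1 P'.2.2).1,
      (key P'.1 P'.2.1 P'.2.2).2⟩
  obtain ⟨K', hK'rank, hK'nle, hK'mono⟩ :=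
    hR F (V × F) hcard hV' H' hH' (fun P' => Δ (toPt P'))
  haveI : FiniteDimensional F K' := FiniteDimensional.of_finrank_pos (by omega)
  set K₀ : Submodule F V := K'.map (LinearMap.fst F V F) with hK₀def
  -- rank bounds
  set f : K' →ₗ[F] V := (LinearMap.fst F V F).comp K'.subtype with hfdef
  have hrange : LinearMap.range f = K₀ := by
    rw [hfdef, LinearMap.range_comp, Submodule.range_subtype]
  have hrn := LinearMap.finrank_range_add_finrank_ker f
  have hkerle : finrank F (LinearMap.ker f) ≤ 1 := by
    set g : LinearMap.ker f →ₗ[F] F :=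
      (LinearMap.snd F V F).comp (K'.subtype.comp (LinearMap.ker f).subtype) with hgdef
    have hginj : Function.Injective g := by
      intro a b hab
      have ha : ((a : K') : V × F).1 = 0 := a.2
      have hb : ((b : K') : V × F).1 = 0 := b.2
      have h2 : ((a : K') : V × F).2 = ((b : K') : V × F).2 := hab
      ext
      · rw [ha, hb]
      · exact h2
    calc finrank F (LinearMap.ker f) ≤ finrank F F :=
          LinearMap.finrank_le_finrank_of_injective hginj
      _ = 1 := finrank_self F
  rw [hrange, hK'rank] at hrn
  have hK₀le : finrank F K₀ ≤ k + 1 := by omega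
  have hK₀ge : k ≤ finrank F K₀ := by omega
  -- monochromaticity on K₀
  have hvK₀H : ∃ v : V, v ∈ K₀ ∧ v ∉ H := by
    obtain ⟨x, hxK', hxH'⟩ := SetLike.not_le_iff_exists.mp hK'nle
    exact ⟨x.1, ⟨x, hxK', rfl⟩, fun hmem => hxH' ⟨hmem, trivial⟩⟩
  have lift : ∀ P : {P : Submodule F V // finrank F P = 1 ∧ ¬ P ≤ H},
      (P : Submodule F V) ≤ K₀ →
      ∃ P' : {P : Submodule F (V × F) // finrank F P = 1 ∧ ¬ P ≤ H'},
        Δ (toPt P') = Δ P ∧ (P' : Submodule F (V × F)) ≤ K' := by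
    intro P hPK
    obtain ⟨v, hv0, hvspan⟩ := point_gen P.1 P.2.1
    have hvP : v ∈ P.1 := hvspan ▸ Submodule.mem_span_singleton_self v
    have hvK₀ : v ∈ K₀ := hPK hvP
    obtain ⟨w, hwK', hwv⟩ := Submodule.mem_map.mp hvK₀
    have hvH : v ∉ H := fun hmem =>
      P.2.2 (hvspan ▸ Submodule.span_le.mpr (by simpa using hmem))
    have hw0 : w ≠ 0 := by
      intro h; apply hv0; rw [← hwv, h]; rfl
    have hmapeq : (Submodule.span F {w}).map (LinearMap.fst F V F) = P.1 := by
      rw [Submodule.map_span, Set.image_singleton]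
      rw [show (LinearMap.fst F V F) w = v from hwv, hvspan]
    have h1' : finrank F (Submodule.span F {w}) = 1 := finrank_span_singleton hw0
    have h2' : ¬ Submodule.span F {w} ≤ H' := by
      intro hle
      have := hle (Submodule.mem_span_singleton_self w)
      exact hvH (hwv ▸ this.1)
    exact ⟨⟨Submodule.span F {w}, h1', h2'⟩, congrArg Δ (Subtype.ext hmapeq),
      Submodule.span_le.mpr (by simpa using hwK')⟩
  have hmono₀ : ∀ P₁ P₂ : {P : Submodule F V // finrank F P = 1 ∧ ¬ P ≤ H},
      (P₁ : Submodule F V) ≤ K₀ → (P₂ : Submodule F V) ≤ K₀ → Δ P₁ = Δ P₂ := by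
    intro P₁ P₂ h1 h2
    obtain ⟨P₁', e1, l1⟩ := lift P₁ h1
    obtain ⟨P₂', e2, l2⟩ := lift P₂ h2
    rw [← e1, ← e2]
    exact hK'mono P₁' P₂' l1 l2
  -- find k-dimensional L
  obtain ⟨v₀, hv₀K₀, hv₀H⟩ := hvK₀H
  have hv₀0 : v₀ ≠ 0 := fun h => hv₀H (h ▸ H.zero_mem)
  have hspanle : Submodule.span F {v₀} ≤ K₀ := Submodule.span_le.mpr (by simpa using hv₀K₀)
  have hspanrank : finrank F (Submodule.span F {v₀}) = 1 := finrank_span_singleton hv₀0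
  obtain ⟨L, hL1, hL2, hL3⟩ := exists_between_fr K₀ (k - finrank F (Submodule.span F {v₀}))
    (Submodule.span F {v₀}) hspanle k (by omega) hK₀ge rfl
  refine ⟨L, hL3, ?_, fun P₁ P₂ h1 h2 => hmono₀ P₁ P₂ (h1.trans hL2) (h2.trans hL2)⟩
  intro hle
  exact hv₀H (hle (hL1 (Submodule.mem_span_singleton_self v₀)))

lemma small {q δ j N : ℕ} (hq : IsPrimePow q) (hδ : 0 < δ) (hN : N ≤ 1) (hNj : N < j) :
    ¬ AffineRamsey q δ j N := by
  intro hR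
  obtain ⟨p, n, hp, hn, rfl⟩ := hq
  haveI hfact : Fact p.Prime := ⟨hp.nat_prime⟩
  letI instF : Fintype (GaloisField p n) := Fintype.ofFinite _
  have hcard : Fintype.card (GaloisField p n) = p ^ n := by
    rw [← Nat.card_eq_fintype_card, GaloisField.card p n (by omega)]
  have hfr : finrank (GaloisField p n) (Fin N → GaloisField p n) = N :=
    Module.finrank_fin_fun (GaloisField p n)
  have hbot : finrank (GaloisField p n)
      (⊥ : Submodule (GaloisField p n) (Fin N → GaloisField p n)) = N - 1 := by
    rw [finrank_bot]; omega
  obtain ⟨K, hKrank, -, -⟩ :=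
    hR (GaloisField p n) (Fin N → GaloisField p n) hcard hfr ⊥ hbot (fun _ => ⟨0, hδ⟩)
  have := Submodule.finrank_le K
  omega


/-- The affine Ramsey number is strictly monotone in `k`:
`n̄₀(k+1, δ, q) > n̄₀(k, δ, q)`. -/
theorem stmt_11 (q δ k : ℕ) (hq : IsPrimePow q) (hδ : 0 < δ) (hk : 0 < k)
    (nk nk1 : ℕ)
    (hnk : IsLeast {N | AffineRamsey q δ k N} nk)
    (hnk1 : IsLeast {N | AffineRamsey q δ (k + 1) N} nk1) :
    nk < nk1 := by
  by_contra hlt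
  push_neg at hlt
  have hmem : AffineRamsey q δ (k + 1) nk1 := hnk1.1
  rcases le_or_gt nk1 1 with h1 | h1
  · exact small hq hδ h1 (by omega) hmem
  · have h3 : ¬ AffineRamsey q δ k (nk1 - 1) := by
      intro hmem'
      exact absurd (hnk.2 hmem') (by omega)
    apply h3
    apply step hk (by omega)
    have : nk1 - 1 + 1 = nk1 := by omega
    rw [this]
    exact hmem
end
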